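/- Let G_0, G be probability measures on a measurable space Θ with E_{G_0}(f_G(X)/f_{G_0}(X))² < ∞, where f_G(x) = ∫ f(x|ϑ) G(dϑ) is the mixture density with respect to a dominating measure ν, and assume ∫ f_G I{f_{G_0} > 0} dν = 1. Set G_t = (1−t)G_0 + tG and f_t = f_{G_t}. Then the path t ↦ G_t satisfies the Hellinger differentiability conditions E_{G_0}(√(f_t/f_0) − 1 − tρ/2)² = o(t²) and ∫ f_t I{f_0 > 0} dν = 1 + o(t²) with score ρ(x) = f_G(x)/f_{G_0}(x) − 1. -/

import Mathlib

open MeasureTheory Filter Asymptotics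


lemma sqrt_abs_sub_one {a : ℝ} (ha : 0 ≤ a) : |Real.sqrt a - 1| ≤ |a - 1| := by
  have hs : Real.sqrt a ^ 2 = a := Real.sq_sqrt ha
  have hsnn : 0 ≤ Real.sqrt a := Real.sqrt_nonneg a
  have h : (Real.sqrt a - 1) ^ 2 ≤ (a - 1) ^ 2 := by nlinarith
  calc |Real.sqrt a - 1| = Real.sqrt ((Real.sqrt a - 1) ^ 2) := (Real.sqrt_sq_eq_abs _).symm
    _ ≤ Real.sqrt ((a - 1) ^ 2) := Real.sqrt_le_sqrt h
    _ = |a - 1| := Real.sqrt_sq_eq_abs _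

lemma sqrt_taylor_bound {u : ℝ} (hu : -1 ≤ u) :
    |Real.sqrt (1 + u) - 1 - u / 2| ≤ 3 / 2 * |u| := by
  have h1 : (0:ℝ) ≤ 1 + u := by linarith
  have key : |Real.sqrt (1 + u) - 1| ≤ |u| := by
    simpa using sqrt_abs_sub_one h1
  calc |Real.sqrt (1 + u) - 1 - u / 2| ≤ |Real.sqrt (1 + u) - 1| + |u / 2| := abs_sub _ _
    _ ≤ |u| + |u| / 2 := by rw [abs_div]; simp; linarith [key]
    _ ≤ 3 / 2 * |u| := by linarith

lemma aux_tendsto (c K : ℝ) :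
    Tendsto (fun t : ℝ => (Real.sqrt (1 + t * c) - 1 - t * c / 2) ^ 2 * K / t ^ 2)
      (nhdsWithin 0 (Set.Ioi 0)) (nhds 0) := by
  set l := nhdsWithin (0:ℝ) (Set.Ioi 0)
  have hd : HasDerivAt (fun u : ℝ => Real.sqrt (1 + u)) (1 / 2) 0 := by
    have h1 : HasDerivAt (fun u : ℝ => 1 + u) 1 0 := (hasDerivAt_id 0).const_add 1
    have h2 : HasDerivAt Real.sqrt (1 / (2 * Real.sqrt 1)) ((fun u : ℝ => 1 + u) 0) := by
      simpa using Real.hasDerivAt_sqrt one_ne_zero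
    have this : HasDerivAt (fun u : ℝ => Real.sqrt (1 + u)) (1 / (2 * Real.sqrt 1) * 1) 0 := h2.comp 0 h1
    simpa [Function.comp] using this
  have ho : (fun u : ℝ => Real.sqrt (1 + u) - 1 - u / 2) =o[nhds 0] fun u => u := by
    have h := hasDerivAt_iff_isLittleO.mp hd
    simp only [sub_zero, smul_eq_mul, add_zero, Real.sqrt_one] at h
    refine h.congr (fun u => by ring) (fun u => rfl)
  have hcomp : Tendsto (fun t : ℝ => t * c) l (nhds 0) := by
    have : Tendsto (fun t : ℝ => t * c) (nhds 0) (nhds (0 * c)) := (continuous_id.mul continuous_const).tendsto 0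
    simpa using this.mono_left nhdsWithin_le_nhds
  have h1 : (fun t : ℝ => Real.sqrt (1 + t * c) - 1 - t * c / 2) =o[l] fun t => t := by
    have h2 := ho.comp_tendsto hcomp
    have h3 : (fun t : ℝ => t * c) =O[l] fun t => t :=
      IsBigO.of_bound |c| (Eventually.of_forall fun t => by
        rw [norm_mul]; rw [mul_comm]; exact mul_le_mul_of_nonneg_right (le_refl _) (norm_nonneg _))
    exact h2.trans_isBigO h3
  have h2 : (fun t : ℝ => (Real.sqrt (1 + t * c) - 1 - t * c / 2) ^ 2) =o[l] fun t => t ^ 2 := by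
    have := h1.mul h1
    simpa [pow_two] using this
  have hne : ∀ᶠ t in l, t ^ 2 = 0 → (Real.sqrt (1 + t * c) - 1 - t * c / 2) ^ 2 = 0 := by
    filter_upwards [self_mem_nhdsWithin] with t ht h
    exact absurd h (pow_ne_zero 2 (ne_of_gt ht))
  have h3 := (isLittleO_iff_tendsto' hne).mp h2
  have h4 := h3.mul_const K
  simp only [zero_mul] at h4
  refine h4.congr fun t => ?_
  ring

/-- The linear mixture path `f_t = (1−t) f_{G_0} + t f_G` is Hellinger differentiable at
`t = 0` with score `ρ = f_G/f_{G_0} − 1`, provided `E_{G_0}(f_G/f_{G_0})² < ∞` and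
`∫ f_G I{f_{G_0} > 0} dν = 1`:
`E_{G_0}(√(f_t/f_0) − 1 − tρ/2)² = o(t²)` and `∫ f_t I{f_0>0} dν = 1 + o(t²)`. -/
theorem mixture_path_hellinger_differentiable {𝒳 : Type*} [MeasurableSpace 𝒳]
    (ν : Measure 𝒳) (f0 fG : 𝒳 → ℝ)
    (hf0m : Measurable f0) (hfGm : Measurable fG)
    (hf0 : 0 ≤ f0) (hfG : 0 ≤ fG)
    (hf0int : ∫ x, f0 x ∂ν = 1)
    (hsupp : ∫ x, (if 0 < f0 x then fG x else 0) ∂ν = 1)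
    (hL2 : Integrable (fun x => (fG x / f0 x) ^ 2 * f0 x) ν) :
    ((fun t => ∫ x,
          (Real.sqrt (((1 - t) * f0 x + t * fG x) / f0 x) - 1
              - t * (fG x / f0 x - 1) / 2) ^ 2 * f0 x ∂ν)
        =o[nhdsWithin 0 (Set.Ioi 0)] fun t => t ^ 2) ∧
    ((fun t => (∫ x, (if 0 < f0 x then (1 - t) * f0 x + t * fG x else 0) ∂ν) - 1)
        =o[nhdsWithin 0 (Set.Ioi 0)] fun t => t ^ 2) := by
  set l := nhdsWithin (0:ℝ) (Set.Ioi 0) with hl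
  have hf0' : ∀ x, 0 ≤ f0 x := fun x => hf0 x
  have hfG' : ∀ x, 0 ≤ fG x := fun x => hfG x
  -- basic integrability
  have hf0i : Integrable f0 ν := by
    by_contra h; rw [integral_undef h] at hf0int; norm_num at hf0int
  have hfGi : Integrable (fun x => if 0 < f0 x then fG x else 0) ν := by
    by_contra h; rw [integral_undef h] at hsupp; norm_num at hsupp
  -- dominating function
  set D : 𝒳 → ℝ := fun x => (fG x / f0 x - 1) ^ 2 * f0 x * (9 / 4) with hD
  have hDnn : ∀ x, 0 ≤ D x := fun x => by
    have := hf0' x; positivity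
  have hDi : Integrable D ν := by
    have hbound : Integrable (fun x => 2 * ((fG x / f0 x) ^ 2 * f0 x + f0 x) * (9/4)) ν :=
      (((hL2.add hf0i).const_mul 2).mul_const _)
    refine Integrable.mono' hbound ?_ (Eventually.of_forall fun x => ?_)
    · apply Measurable.aestronglyMeasurable
      exact (((hfGm.div hf0m).sub measurable_const).pow measurable_const).mul hf0m |>.mul measurable_const
    · have h0 := hf0' x
      have hG := hfG x
      rw [Real.norm_eq_abs, abs_of_nonneg (hDnn x), hD]
      have hr : 0 ≤ fG x / f0 x := div_nonneg hG h0
      nlinarith [sq_nonneg (fG x / f0 x - 1), sq_nonneg (fG x / f0 x + 1), mul_nonneg (sq_nonneg (fG x / f0 x - 1)) h0]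
  -- the normalized integrand
  set F : ℝ → 𝒳 → ℝ := fun t x =>
      (Real.sqrt (((1 - t) * f0 x + t * fG x) / f0 x) - 1
        - t * (fG x / f0 x - 1) / 2) ^ 2 * f0 x / t ^ 2 with hF
  have hratio : ∀ (t : ℝ) (x : 𝒳), 0 < f0 x →
      ((1 - t) * f0 x + t * fG x) / f0 x = 1 + t * (fG x / f0 x - 1) := by
    intro t x hx
    field_simp
    ring
  have hmeas : ∀ᶠ t in l, AEStronglyMeasurable (F t) ν := by
    refine Eventually.of_forall fun t => Measurable.aestronglyMeasurable ?_
    apply Measurable.div _ measurable_const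
    apply Measurable.mul _ hf0m
    apply Measurable.pow _ measurable_const
    apply Measurable.sub
    apply Measurable.sub
    · exact (((measurable_const.mul hf0m).add (measurable_const.mul hfGm)).div hf0m).sqrt
    · exact measurable_const
    · exact (measurable_const.mul ((hfGm.div hf0m).sub measurable_const)).div measurable_const
  have hbound : ∀ᶠ t in l, ∀ᵐ x ∂ν, ‖F t x‖ ≤ D x := by
    filter_upwards [Ioo_mem_nhdsGT_of_mem (by norm_num : (0:ℝ) ∈ Set.Ico (0:ℝ) 1)] with t ht
    refine Eventually.of_forall fun x => ?_
    rcases lt_or_ge 0 (f0 x) with hx | hx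
    · -- positive density case
      have hc : -1 ≤ fG x / f0 x - 1 := by
        have : 0 ≤ fG x / f0 x := div_nonneg (hfG' x) hx.le
        linarith
      set c := fG x / f0 x - 1
      have hu : -1 ≤ t * c := by
        rcases le_or_gt 0 c with h | h
        · have : 0 ≤ t * c := mul_nonneg ht.1.le h
          linarith
        · nlinarith [ht.1, ht.2, hc]
      have hb := sqrt_taylor_bound hu
      have hFnn : 0 ≤ F t x := by
        have := hf0' x; positivity
      rw [Real.norm_eq_abs, abs_of_nonneg hFnn, hF]
      simp only
      rw [hratio t x hx]
      have habs : (Real.sqrt (1 + t * c) - 1 - t * c / 2) ^ 2 ≤ (3/2 * |t * c|)^2 := by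
        have := abs_nonneg (Real.sqrt (1 + t * c) - 1 - t * c / 2)
        calc (Real.sqrt (1 + t * c) - 1 - t * c / 2) ^ 2
            = |Real.sqrt (1 + t * c) - 1 - t * c / 2| ^ 2 := (sq_abs _).symm
          _ ≤ (3/2 * |t * c|)^2 := by
              apply pow_le_pow_left₀ (abs_nonneg _) hb
      have hrw : (3/2 * |t * c|)^2 = 9/4 * (t^2 * c^2) := by
        rw [mul_pow, abs_mul, mul_pow, sq_abs, sq_abs]; ring
      have ht2 : 0 < t ^ 2 := pow_pos ht.1 2
      rw [div_le_iff₀ ht2]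
      have hcongr : t * c / 2 = t * (fG x / f0 x - 1) / 2 := rfl
      calc (Real.sqrt (1 + t * c) - 1 - t * (fG x / f0 x - 1) / 2) ^ 2 * f0 x
          = (Real.sqrt (1 + t * c) - 1 - t * c / 2) ^ 2 * f0 x := rfl
        _ ≤ 9/4 * (t^2 * c^2) * f0 x := by
            apply mul_le_mul_of_nonneg_right _ (hf0' x)
            calc _ ≤ (3/2 * |t * c|)^2 := habs
              _ = 9/4 * (t^2 * c^2) := hrw
        _ = D x * t ^ 2 := by rw [hD]; ring
    · -- zero density case
      have hx0 : f0 x = 0 := le_antisymm hx (hf0' x)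
      have : F t x = 0 := by rw [hF]; simp [hx0]
      rw [this, norm_zero]
      exact hDnn x
  have hlim : ∀ᵐ x ∂ν, Tendsto (fun t => F t x) l (nhds 0) := by
    refine Eventually.of_forall fun x => ?_
    rcases lt_or_ge 0 (f0 x) with hx | hx
    · set c := fG x / f0 x - 1
      have := aux_tendsto c (f0 x)
      refine this.congr' ?_
      filter_upwards [self_mem_nhdsWithin] with t ht
      rw [hF]
      simp only
      rw [hratio t x hx]
    · have hx0 : f0 x = 0 := le_antisymm hx (hf0' x)
      have : (fun t => F t x) = fun _ => (0:ℝ) := by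
        funext t; rw [hF]; simp [hx0]
      rw [this]
      exact tendsto_const_nhds
  have hT : Tendsto (fun t => ∫ x, F t x ∂ν) l (nhds 0) := by
    have := tendsto_integral_filter_of_dominated_convergence D hmeas hbound hDi hlim
    simpa using this
  have hne : ∀ᶠ t in l, t ^ 2 = 0 →
      (∫ x, (Real.sqrt (((1 - t) * f0 x + t * fG x) / f0 x) - 1
          - t * (fG x / f0 x - 1) / 2) ^ 2 * f0 x ∂ν) = 0 := by
    filter_upwards [self_mem_nhdsWithin] with t ht h
    exact absurd h (pow_ne_zero 2 (ne_of_gt ht))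
  constructor
  · rw [isLittleO_iff_tendsto' hne]
    refine hT.congr fun t => ?_
    rw [hF]
    exact integral_div _ _
  · have h0 : ∀ t : ℝ, (∫ x, (if 0 < f0 x then (1 - t) * f0 x + t * fG x else 0) ∂ν) = 1 := by
      intro t
      have heq : (fun x => if 0 < f0 x then (1 - t) * f0 x + t * fG x else 0)
          = fun x => (1 - t) * f0 x + t * (if 0 < f0 x then fG x else 0) := by
        funext x
        by_cases hx : 0 < f0 x
        · simp [hx]
        · have hx0 : f0 x = 0 := le_antisymm (not_lt.mp hx) (hf0' x)
          simp [hx, hx0]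
      rw [heq, integral_add (hf0i.const_mul _) (hfGi.const_mul _),
        integral_const_mul, integral_const_mul, hf0int, hsupp]
      ring
    have : (fun t : ℝ => (∫ x, (if 0 < f0 x then (1 - t) * f0 x + t * fG x else 0) ∂ν) - 1)
        = fun _ => (0:ℝ) := by
      funext t; rw [h0 t]; ring
    rw [this]
    exact isLittleO_zero _ _
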